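/- Let X and U be real Hilbert spaces, B : U → X bounded linear, and M : X → X strongly accretive at x̄ ∈ X with constant c > 0, i.e. ⟨x - x̄, M(x) - M(x̄)⟩ ≥ c‖x - x̄‖² for all x ∈ X. Let ū ∈ U satisfy -M(x̄) + B ū = 0 and suppose x : ℝ → X satisfies, for every t ≥ 0, HasDerivAt x (-M(x(t)) + B ū) t. Then for all t ≥ 0 one has ‖x(t) - x̄‖ ≤ ‖x(0) - x̄‖ · exp(-c t), i.e. the trajectory converges exponentially to the steady state x̄. -/

import Mathlib

open scoped RealInnerProductSpace

/-- Exponential convergence to the steady state for a monotone pH system whose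
operator `M` is strongly accretive at the steady state `x̄`, under the constant
input `u ≡ ū`. -/
theorem exponential_convergence_strongly_accretive
    {X U : Type*} [NormedAddCommGroup X] [InnerProductSpace ℝ X] [CompleteSpace X]
    [NormedAddCommGroup U] [InnerProductSpace ℝ U] [CompleteSpace U]
    (M : X → X) (B : U →L[ℝ] X) (xbar : X) (ubar : U) (c : ℝ) (hc : 0 < c)
    (hM : ∀ x : X, c * ‖x - xbar‖ ^ 2 ≤ ⟪x - xbar, M x - M xbar⟫)
    (hss : -M xbar + B ubar = 0)
    (x : ℝ → X) (hx : ∀ t : ℝ, 0 ≤ t → HasDerivAt x (-M (x t) + B ubar) t) :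
    ∀ t : ℝ, 0 ≤ t → ‖x t - xbar‖ ≤ ‖x 0 - xbar‖ * Real.exp (-c * t) := by
  have hB : B ubar = M xbar := by
    have := hss
    have h := congrArg (fun z => z + M xbar) hss
    simpa [add_comm, add_assoc, neg_add_cancel] using h
  set f : ℝ → X := fun t => x t - xbar with hf
  have hf' : ∀ t : ℝ, 0 ≤ t → HasDerivAt f (-(M (x t) - M xbar)) t := by
    intro t ht
    have := (hx t ht).sub_const xbar
    convert this using 1
    rw [hB]; abel
  set h : ℝ → ℝ := fun t => Real.exp (2 * c * t) * ⟪f t, f t⟫ with hh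
  have hderiv : ∀ t : ℝ, 0 ≤ t →
      HasDerivAt h (Real.exp (2 * c * t) * (2 * c * ⟪f t, f t⟫
        + (⟪-(M (x t) - M xbar), f t⟫ + ⟪f t, -(M (x t) - M xbar)⟫))) t := by
    intro t ht
    have he : HasDerivAt (fun t => Real.exp (2 * c * t)) (Real.exp (2 * c * t) * (2 * c)) t := by
      simpa [Function.comp_def] using (Real.hasDerivAt_exp (2 * c * t)).comp t
        ((hasDerivAt_id t).const_mul (2 * c))
    have hi : HasDerivAt (fun t => (⟪f t, f t⟫ : ℝ))
        (⟪-(M (x t) - M xbar), f t⟫ + ⟪f t, -(M (x t) - M xbar)⟫) t := by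
      have := (hf' t ht).inner ℝ (hf' t ht)
      simpa [add_comm] using this
    have := he.mul hi
    convert this using 1
    · rfl
    · rfl
    · rfl
    · ring
  have hderiv_nonpos : ∀ t : ℝ, 0 ≤ t →
      Real.exp (2 * c * t) * (2 * c * ⟪f t, f t⟫
        + (⟪-(M (x t) - M xbar), f t⟫ + ⟪f t, -(M (x t) - M xbar)⟫)) ≤ 0 := by
    intro t ht
    have h1 := hM (x t)
    have h2 : (⟪f t, f t⟫ : ℝ) = ‖f t‖ ^ 2 := real_inner_self_eq_norm_sq (f t)
    have h3 : (⟪-(M (x t) - M xbar), f t⟫ : ℝ) = -⟪f t, M (x t) - M xbar⟫ := by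
      rw [inner_neg_left, real_inner_comm]
    have h4 : (⟪f t, -(M (x t) - M xbar)⟫ : ℝ) = -⟪f t, M (x t) - M xbar⟫ := by
      rw [inner_neg_right]
    have hexp : 0 < Real.exp (2 * c * t) := Real.exp_pos _
    have : 2 * c * ⟪f t, f t⟫ + (⟪-(M (x t) - M xbar), f t⟫ + ⟪f t, -(M (x t) - M xbar)⟫) ≤ 0 := by
      rw [h2, h3, h4]
      nlinarith [h1]
    exact mul_nonpos_of_nonneg_of_nonpos hexp.le this
  intro t ht
  have hanti : AntitoneOn h (Set.Ici (0:ℝ)) := by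
    apply antitoneOn_of_deriv_nonpos (convex_Ici 0)
    · exact fun s hs => ((hderiv s hs).continuousAt).continuousWithinAt
    · intro s hs
      rw [interior_Ici] at hs
      exact ((hderiv s (le_of_lt hs)).differentiableAt).differentiableWithinAt
    · intro s hs
      rw [interior_Ici] at hs
      rw [(hderiv s (le_of_lt hs)).deriv]
      exact hderiv_nonpos s (le_of_lt hs)
  have hht : h t ≤ h 0 := hanti (Set.self_mem_Ici) (Set.mem_Ici.2 ht) ht
  have h0 : h 0 = ⟪f 0, f 0⟫ := by simp [hh]
  have hkey : Real.exp (2 * c * t) * ‖f t‖ ^ 2 ≤ ‖f 0‖ ^ 2 := by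
    have := hht
    rw [h0] at this
    simpa [hh, real_inner_self_eq_norm_sq] using this
  have hineq : ‖f t‖ ^ 2 ≤ (‖f 0‖ * Real.exp (-c * t)) ^ 2 := by
    have hexp : 0 < Real.exp (2 * c * t) := Real.exp_pos _
    have h5 : (‖f 0‖ * Real.exp (-c * t)) ^ 2 * Real.exp (2 * c * t) = ‖f 0‖ ^ 2 := by
      rw [mul_pow, ← Real.exp_nat_mul, mul_assoc, ← Real.exp_add]
      norm_num
      ring_nf
      simp
    nlinarith [hkey, sq_nonneg (‖f t‖)]
  have := (pow_le_pow_iff_left₀ (norm_nonneg (f t))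
      (mul_nonneg (norm_nonneg (f 0)) (Real.exp_nonneg _)) (two_ne_zero)).1 hineq
  simpa [hf] using this
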